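/- For compositions λ, μ ∈ Λ(n,r) with λ ⊵ μ, the map t sending a pair (i,j) of multi-indices in I(n,r) with i ≤ j, wt(i) = λ, wt(j) = μ to the matrix t(i,j)_{σρ} = #{τ : i_τ = σ, j_τ = ρ} induces a bijection between the Σ_r-orbits Ω(λ,μ) = {(i,j) : i ≤ j, wt(i)=λ, wt(j)=μ}/Σ_r and the set T(λ,μ) of upper-triangular n×n matrices K over N with row sums ∑_{ρ≥σ} k_{σρ} = λ_σ and column sums ∑_{σ≤ρ} k_{σρ} = μ_ρ. -/

import Mathlib

open Finset

/-- The weight of a multi-index `i ∈ I(n,r)`: `wt(i)_ν = #{ρ : i_ρ = ν}`. -/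
def wtOf {n r : ℕ} (i : Fin r → Fin n) : Fin n → ℕ :=
  fun ν => (Finset.univ.filter fun ρ => i ρ = ν).card

/-- If two functions on `Fin r` have fibers of equal cardinalities, they differ by a
permutation. -/
lemma exists_perm_of_fiber_card_eq {X : Type*} [DecidableEq X] {r : ℕ}
    (f g : Fin r → X)
    (h : ∀ x, (univ.filter fun τ => f τ = x).card = (univ.filter fun τ => g τ = x).card) :
    ∃ π : Equiv.Perm (Fin r), ∀ σ, f (π σ) = g σ := by
  have hc : ∀ x, Fintype.card {τ // g τ = x} = Fintype.card {τ // f τ = x} := by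
    intro x
    simp only [Fintype.card_subtype]
    exact (h x).symm
  let e : ∀ x, {τ // g τ = x} ≃ {τ // f τ = x} := fun x => Fintype.equivOfCardEq (hc x)
  let π : Equiv.Perm (Fin r) :=
    ((Equiv.sigmaFiberEquiv g).symm.trans (Equiv.sigmaCongrRight e)).trans
      (Equiv.sigmaFiberEquiv f)
  exact ⟨π, fun σ => (e (g σ) ⟨σ, rfl⟩).2⟩

/-- Realize a weight function as fiber cardinalities of a function on `Fin r`. -/
lemma exists_fn_of_weights {X : Type*} [DecidableEq X] [Fintype X] {r : ℕ}
    (w : X → ℕ) (hw : ∑ x, w x = r) :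
    ∃ f : Fin r → X, ∀ x, (univ.filter fun τ => f τ = x).card = w x := by
  have hcard : Fintype.card (Σ x, Fin (w x)) = Fintype.card (Fin r) := by
    simp [hw]
  let e : (Σ x, Fin (w x)) ≃ Fin r := Fintype.equivOfCardEq hcard
  refine ⟨fun τ => (e.symm τ).1, fun x => ?_⟩
  have e2 : {s : Σ y, Fin (w y) // s.1 = x} ≃ Fin (w x) :=
    { toFun := fun s => Fin.cast (congrArg w s.2) s.1.2
      invFun := fun k => ⟨⟨x, k⟩, rfl⟩
      left_inv := fun s => by rcases s with ⟨⟨y, k⟩, h⟩; subst h; rfl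
      right_inv := fun k => rfl }
  calc (univ.filter fun τ => (e.symm τ).1 = x).card
      = Fintype.card {τ // (e.symm τ).1 = x} := (Fintype.card_subtype _).symm
    _ = Fintype.card {s : Σ y, Fin (w y) // s.1 = x} :=
        Fintype.card_congr (Equiv.subtypeEquiv e.symm (fun τ => Iff.rfl))
    _ = w x := by rw [Fintype.card_congr e2, Fintype.card_fin]

theorem stmt17 (n r : ℕ) (lam mu : Fin n → ℕ)
    (hlam : ∑ ν, lam ν = r) (hmu : ∑ ν, mu ν = r)
    (hdom : ∀ j : Fin n, ∑ i ∈ Finset.Iic j, mu i ≤ ∑ i ∈ Finset.Iic j, lam i) :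
    ∃ F : Quot (fun p q : {p : (Fin r → Fin n) × (Fin r → Fin n) //
          (∀ σ, p.1 σ ≤ p.2 σ) ∧ wtOf p.1 = lam ∧ wtOf p.2 = mu} =>
        ∃ π : Equiv.Perm (Fin r), (∀ σ, p.1.1 (π σ) = q.1.1 σ) ∧
          (∀ σ, p.1.2 (π σ) = q.1.2 σ)) ≃
      {Km : Matrix (Fin n) (Fin n) ℕ //
        (∀ σ ρ : Fin n, ρ < σ → Km σ ρ = 0) ∧
        (∀ σ : Fin n, ∑ ρ ∈ Finset.univ.filter (fun ρ => σ ≤ ρ), Km σ ρ = lam σ) ∧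
        (∀ ρ : Fin n, ∑ σ ∈ Finset.univ.filter (fun σ => σ ≤ ρ), Km σ ρ = mu ρ)},
      ∀ p, (F (Quot.mk _ p) : Matrix (Fin n) (Fin n) ℕ) =
        fun σ ρ => (Finset.univ.filter fun τ => p.1.1 τ = σ ∧ p.1.2 τ = ρ).card := by

  set Pty := {p : (Fin r → Fin n) × (Fin r → Fin n) //
      (∀ σ, p.1 σ ≤ p.2 σ) ∧ wtOf p.1 = lam ∧ wtOf p.2 = mu} with hPty
  let t : ((Fin r → Fin n) × (Fin r → Fin n)) → Matrix (Fin n) (Fin n) ℕ :=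
    fun p σ ρ => (Finset.univ.filter fun τ => p.1 τ = σ ∧ p.2 τ = ρ).card
  -- triangularity
  have htri : ∀ p : (Fin r → Fin n) × (Fin r → Fin n), (∀ σ, p.1 σ ≤ p.2 σ) →
      ∀ σ ρ : Fin n, ρ < σ → t p σ ρ = 0 := by
    intro p hle σ ρ hρσ
    simp only [t, Finset.card_eq_zero, Finset.filter_eq_empty_iff]
    rintro τ - ⟨h1, h2⟩
    exact absurd (h1 ▸ h2 ▸ hle τ) (not_le.mpr hρσ)
  -- row sums
  have hrow : ∀ p : (Fin r → Fin n) × (Fin r → Fin n), (∀ σ, p.1 σ ≤ p.2 σ) →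
      ∀ σ : Fin n, ∑ ρ ∈ Finset.univ.filter (fun ρ => σ ≤ ρ), t p σ ρ = wtOf p.1 σ := by
    intro p hle σ
    have hfull : ∑ ρ : Fin n, t p σ ρ = wtOf p.1 σ := by
      rw [wtOf, Finset.card_eq_sum_card_fiberwise (f := p.2)
        (t := Finset.univ) (fun τ _ => Finset.mem_univ _)]
      refine Finset.sum_congr rfl fun ρ _ => ?_
      rw [Finset.filter_filter]
    rw [← hfull]
    apply Finset.sum_subset (Finset.filter_subset _ _)
    intro ρ _ hρ
    simp only [Finset.mem_filter, Finset.mem_univ, true_and, not_le] at hρ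
    exact htri p hle σ ρ hρ
  -- column sums
  have hcol : ∀ p : (Fin r → Fin n) × (Fin r → Fin n), (∀ σ, p.1 σ ≤ p.2 σ) →
      ∀ ρ : Fin n, ∑ σ ∈ Finset.univ.filter (fun σ => σ ≤ ρ), t p σ ρ = wtOf p.2 ρ := by
    intro p hle ρ
    have hfull : ∑ σ : Fin n, t p σ ρ = wtOf p.2 ρ := by
      rw [wtOf, Finset.card_eq_sum_card_fiberwise (f := p.1)
        (t := Finset.univ) (fun τ _ => Finset.mem_univ _)]
      refine Finset.sum_congr rfl fun σ _ => ?_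
      rw [Finset.filter_filter]
      exact Finset.card_bij (fun τ _ => τ)
        (by simp +contextual [and_comm]) (by intro a _ b _ h; exact h)
        (by intro τ hτ; exact ⟨τ, by simp_all [and_comm], rfl⟩)
    rw [← hfull]
    apply Finset.sum_subset (Finset.filter_subset _ _)
    intro σ _ hσ
    simp only [Finset.mem_filter, Finset.mem_univ, true_and, not_le] at hσ
    exact htri p hle σ ρ hσ
  set Tty := {Km : Matrix (Fin n) (Fin n) ℕ //
        (∀ σ ρ : Fin n, ρ < σ → Km σ ρ = 0) ∧
        (∀ σ : Fin n, ∑ ρ ∈ Finset.univ.filter (fun ρ => σ ≤ ρ), Km σ ρ = lam σ) ∧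
        (∀ ρ : Fin n, ∑ σ ∈ Finset.univ.filter (fun σ => σ ≤ ρ), Km σ ρ = mu ρ)} with hTty
  let tT : Pty → Tty := fun p =>
    ⟨t p.1, htri p.1 p.2.1, fun σ => by rw [hrow p.1 p.2.1, p.2.2.1],
      fun ρ => by rw [hcol p.1 p.2.1, p.2.2.2]⟩
  -- well-definedness on the quotient
  have hwd : ∀ p q : Pty, (∃ π : Equiv.Perm (Fin r), (∀ σ, p.1.1 (π σ) = q.1.1 σ) ∧
      (∀ σ, p.1.2 (π σ) = q.1.2 σ)) → tT p = tT q := by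
    rintro p q ⟨π, h1, h2⟩
    apply Subtype.ext
    funext σ ρ
    show t p.1 σ ρ = t q.1 σ ρ
    refine (Finset.card_bij (fun τ _ => π τ) ?_ ?_ ?_).symm
    · intro τ hτ
      simp only [Finset.mem_filter, Finset.mem_univ, true_and] at hτ ⊢
      exact ⟨(h1 τ).trans hτ.1, (h2 τ).trans hτ.2⟩
    · intro a _ b _ hab; exact π.injective hab
    · intro τ hτ
      refine ⟨π.symm τ, ?_, π.apply_symm_apply τ⟩
      simp only [Finset.mem_filter, Finset.mem_univ, true_and] at hτ ⊢
      have e1 := h1 (π.symm τ); have e2 := h2 (π.symm τ)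
      rw [π.apply_symm_apply] at e1 e2
      exact ⟨e1.symm.trans hτ.1, e2.symm.trans hτ.2⟩
  -- injectivity
  have hinj : ∀ p q : Pty, tT p = tT q → Quot.mk
      (fun p q : Pty => ∃ π : Equiv.Perm (Fin r), (∀ σ, p.1.1 (π σ) = q.1.1 σ) ∧
        (∀ σ, p.1.2 (π σ) = q.1.2 σ)) p
      = Quot.mk _ q := by
    intro p q h
    apply Quot.sound
    have hfib : ∀ x : Fin n × Fin n,
        (univ.filter fun τ => (p.1.1 τ, p.1.2 τ) = x).card
          = (univ.filter fun τ => (q.1.1 τ, q.1.2 τ) = x).card := by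
      intro x
      have hK := congrArg (fun K : Tty => K.1 x.1 x.2) h
      simp only [tT] at hK
      simpa [Prod.ext_iff] using hK
    obtain ⟨π, hπ⟩ := exists_perm_of_fiber_card_eq
      (fun τ => (p.1.1 τ, p.1.2 τ)) (fun τ => (q.1.1 τ, q.1.2 τ)) hfib
    exact ⟨π, fun σ => congrArg Prod.fst (hπ σ), fun σ => congrArg Prod.snd (hπ σ)⟩
  -- surjectivity
  have hsurj : ∀ K : Tty, ∃ p : Pty, tT p = K := by
    intro K
    have hsum : ∑ x : Fin n × Fin n, K.1 x.1 x.2 = r := by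
      rw [Fintype.sum_prod_type]
      calc ∑ σ, ∑ ρ, K.1 σ ρ = ∑ σ, lam σ := by
            refine Finset.sum_congr rfl fun σ _ => ?_
            rw [← K.2.2.1 σ]
            refine (Finset.sum_subset (Finset.filter_subset _ _) ?_).symm
            intro ρ _ hρ
            simp only [Finset.mem_filter, Finset.mem_univ, true_and, not_le] at hρ
            exact K.2.1 σ ρ hρ
        _ = r := hlam
    obtain ⟨c, hc⟩ := exists_fn_of_weights (fun x : Fin n × Fin n => K.1 x.1 x.2) hsum
    set i : Fin r → Fin n := fun τ => (c τ).1 with hi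
    set j : Fin r → Fin n := fun τ => (c τ).2 with hj
    have hKt : t (i, j) = K.1 := by
      funext σ ρ
      have := hc (σ, ρ)
      simpa [t, Prod.ext_iff] using this
    have hle : ∀ τ, i τ ≤ j τ := by
      intro τ
      by_contra hlt
      push_neg at hlt
      have h0 : K.1 (i τ) (j τ) = 0 := K.2.1 _ _ hlt
      have hmem : τ ∈ univ.filter fun τ' => c τ' = c τ := by simp
      have hpos : 0 < (univ.filter fun τ' => c τ' = c τ).card :=
        Finset.card_pos.mpr ⟨τ, hmem⟩
      rw [hc (c τ)] at hpos
      exact absurd h0 hpos.ne'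
    have hw1 : wtOf i = lam := by
      funext σ
      rw [← hrow (i, j) hle σ]
      simp only [hKt]
      exact K.2.2.1 σ
    have hw2 : wtOf j = mu := by
      funext ρ
      rw [← hcol (i, j) hle ρ]
      simp only [hKt]
      exact K.2.2.2 ρ
    exact ⟨⟨(i, j), hle, hw1, hw2⟩, Subtype.ext hKt⟩
  refine ⟨Equiv.ofBijective (Quot.lift tT hwd) ⟨?_, ?_⟩, fun p => by rfl⟩
  · intro a b
    induction a using Quot.ind with | _ p => ?_
    induction b using Quot.ind with | _ q => ?_
    exact hinj p q
  · intro K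
    obtain ⟨p0, hp0⟩ := hsurj K
    exact ⟨Quot.mk _ p0, hp0⟩
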